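/- Let R be a commutative semiring, A an n×n matrix over R, m ≥ 1, S a subset of the index set, and π a permutation of the index set with π(S) = S. Then there exists c ∈ R such that perm((A^m)|_S) = (∏_{i ∈ S} A_{i,π(i)})^m + c, where (A^m)|_S is the principal submatrix of the ordinary m-th matrix power A^m with rows and columns indexed by S. -/

import Mathlib

private lemma aux_pick_sum {R : Type*} [CommSemiring R] {ι : Type*} [DecidableEq ι] (s : Finset ι)
    (f : ι → R) {b : ι} (hb : b ∈ s) : ∃ c : R, ∑ x ∈ s, f x = f b + c :=
  ⟨∑ x ∈ s.erase b, f x, (Finset.add_sum_erase s f hb).symm⟩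

private lemma aux_prod_add {R : Type*} [CommSemiring R] {ι : Type*} (s : Finset ι)
    (f t : ι → R) (h : ∀ i ∈ s, ∃ c : R, f i = t i + c) :
    ∃ c : R, ∏ i ∈ s, f i = (∏ i ∈ s, t i) + c := by
  classical
  induction s using Finset.cons_induction with
  | empty => exact ⟨0, by simp⟩
  | cons a s ha ih =>
    obtain ⟨c, hc⟩ := ih (fun i hi => h i (Finset.mem_cons_of_mem hi))
    obtain ⟨d, hd⟩ := h a (Finset.mem_cons_self a s)
    refine ⟨t a * c + d * ((∏ i ∈ s, t i) + c), ?_⟩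
    rw [Finset.prod_cons, Finset.prod_cons, hc, hd]
    ring

private lemma aux_track {R : Type*} [CommSemiring R] {n : ℕ}
    (A : Matrix (Fin n) (Fin n) R) (π : Equiv.Perm (Fin n)) (m : ℕ) (i : Fin n) :
    ∃ c : R, (A ^ m) i ((π ^ m) i) =
      (∏ j ∈ Finset.range m, A ((π ^ j) i) ((π ^ (j + 1)) i)) + c := by
  induction m with
  | zero => exact ⟨0, by simp⟩
  | succ m ih =>
    obtain ⟨c, hc⟩ := ih
    rw [pow_succ, Matrix.mul_apply]
    obtain ⟨d, hd⟩ := aux_pick_sum Finset.univ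
      (fun k => (A ^ m) i k * A k ((π ^ (m + 1)) i)) (Finset.mem_univ ((π ^ m) i))
    refine ⟨c * A ((π ^ m) i) ((π ^ (m + 1)) i) + d, ?_⟩
    rw [hd, hc, Finset.prod_range_succ]
    ring

private lemma aux_image_pow {n : ℕ} (S : Finset (Fin n)) (π : Equiv.Perm (Fin n))
    (hπ : S.image π = S) : ∀ j : ℕ, S.image (π ^ j) = S := by
  intro j
  induction j with
  | zero => simp
  | succ j ih =>
    have : S.image ⇑(π ^ (j + 1)) = (S.image ⇑π).image ⇑(π ^ j) := by
      rw [Finset.image_image]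
      rfl
    rw [this, hπ, ih]

private lemma aux_coe {n : ℕ} (S : Finset (Fin n)) (π : Equiv.Perm (Fin n))
    (hmem : ∀ x : Fin n, x ∈ S ↔ π x ∈ S) (m : ℕ) (i : {a // a ∈ S}) :
    ((π.subtypePerm (fun x => (hmem x).symm) ^ m) i : Fin n) = (π ^ m) (i : Fin n) := by
  induction m with
  | zero => simp
  | succ k ih => rw [pow_succ, pow_succ]; simp [Equiv.Perm.mul_apply, ih]; rfl

/-- Existence content of Claim 3.5: for every permutation-track monomial
`∏_{i ∈ S} A_{i, π(i)}` of a principal minor of `A` (where `π(S) = S`), its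
`m`-th power appears as a summand of the permanent of the corresponding
principal minor of `A^m`. -/
theorem permanent_pow_submatrix_eq_track_pow_add {R : Type*} [CommSemiring R]
    {n : ℕ} (A : Matrix (Fin n) (Fin n) R) (m : ℕ) (hm : 1 ≤ m)
    (S : Finset (Fin n)) (π : Equiv.Perm (Fin n)) (hπ : S.image π = S) :
    ∃ c : R,
      ((A ^ m).submatrix (fun x : {a // a ∈ S} => (x : Fin n))
        (fun x : {a // a ∈ S} => (x : Fin n))).permanent =
      (∏ i ∈ S, A i (π i)) ^ m + c := by
  classical
  have hmem : ∀ x : Fin n, x ∈ S ↔ π x ∈ S := by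
    intro x
    constructor
    · intro hx; rw [← hπ]; exact Finset.mem_image_of_mem _ hx
    · intro hx
      rw [← hπ] at hx
      obtain ⟨y, hy, hyx⟩ := Finset.mem_image.mp hx
      rwa [← π.injective hyx]
  set τ : Equiv.Perm {a // a ∈ S} := (π.subtypePerm (fun x => (hmem x).symm)) ^ m with hτ
  -- the summand of the permanent corresponding to τ⁻¹
  obtain ⟨c₁, hc₁⟩ := aux_pick_sum Finset.univ
    (fun σ : Equiv.Perm {a // a ∈ S} =>
      ∏ i, ((A ^ m).submatrix (fun x : {a // a ∈ S} => (x : Fin n))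
        (fun x : {a // a ∈ S} => (x : Fin n))) (σ i) i)
    (Finset.mem_univ τ⁻¹)
  rw [Matrix.permanent, hc₁]
  have hreindex : (∏ i, ((A ^ m).submatrix (fun x : {a // a ∈ S} => (x : Fin n))
        (fun x : {a // a ∈ S} => (x : Fin n))) (τ⁻¹ i) i)
      = ∏ i ∈ S, (A ^ m) i ((π ^ m) i) := by
    rw [← Equiv.prod_comp τ (fun i => ((A ^ m).submatrix _ _) (τ⁻¹ i) i)]
    simp only [Equiv.Perm.inv_def, Equiv.symm_apply_apply, Matrix.submatrix_apply]
    rw [← Finset.prod_coe_sort S (fun i => (A ^ m) i ((π ^ m) i))]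
    refine Finset.prod_congr rfl fun i _ => ?_
    rw [hτ, aux_coe S π hmem m i]
  rw [hreindex]
  obtain ⟨c₂, hc₂⟩ := aux_prod_add S (fun i => (A ^ m) i ((π ^ m) i))
    (fun i => ∏ j ∈ Finset.range m, A ((π ^ j) i) ((π ^ (j + 1)) i))
    (fun i _ => aux_track A π m i)
  rw [hc₂]
  have hswap : (∏ i ∈ S, ∏ j ∈ Finset.range m, A ((π ^ j) i) ((π ^ (j + 1)) i))
      = (∏ i ∈ S, A i (π i)) ^ m := by
    rw [Finset.prod_comm]
    have : ∀ j ∈ Finset.range m,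
        (∏ i ∈ S, A ((π ^ j) i) ((π ^ (j + 1)) i)) = ∏ i ∈ S, A i (π i) := by
      intro j _
      have h1 : ∀ i : Fin n, (π ^ (j + 1)) i = π ((π ^ j) i) := by
        intro i; rw [pow_succ']; rfl
      calc ∏ i ∈ S, A ((π ^ j) i) ((π ^ (j + 1)) i)
          = ∏ i ∈ S, A ((π ^ j) i) (π ((π ^ j) i)) := by
            exact Finset.prod_congr rfl fun i _ => by rw [h1]
        _ = ∏ k ∈ S.image (π ^ j), A k (π k) := by
            rw [Finset.prod_image (fun a _ b _ h => (π ^ j).injective h)]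
        _ = ∏ i ∈ S, A i (π i) := by rw [aux_image_pow S π hπ]
    rw [Finset.prod_congr rfl this, Finset.prod_const, Finset.card_range]
  rw [hswap, add_assoc]
  exact ⟨c₂ + c₁, rfl⟩
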